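/- Let μ be a probability measure on ℬ(ℝ) having a density with respect to Lebesgue measure given by an even function, and such that ∫_0^∞ x dμ(x) = ∞. Define the positive operator measure E : ℬ(ℝ) → L(H) by E(B) = μ(B)·I, and let f(x) = x. Then D(f,E) = {0}, while for every φ ∈ H and every n ∈ ℕ one has L(f̃_n, E)φ = 0, so that the limit lim_{n→∞} L(f̃_n,E)φ exists for every φ ∈ H (i.e., D^{f,E} = H). In particular the inclusion D(f,E) ⊆ D^{f,E} := {φ ∈ H : lim_{n→∞} L(f̃_n,E)φ exists} can be proper. -/

import Mathlib

open MeasureTheory Filter Topology ComplexConjugate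
open scoped ENNReal NNReal

noncomputable section

local notation "⟪" x ", " y "⟫" => @inner ℂ _ _ x y

/-- The total variation measure of a complex measure. -/
def MeasureTheory.ComplexMeasure.tv {Ω : Type*} [MeasurableSpace Ω]
    (ν : MeasureTheory.ComplexMeasure Ω) : MeasureTheory.Measure Ω :=
  (MeasureTheory.ComplexMeasure.re ν).totalVariation +
    (MeasureTheory.ComplexMeasure.im ν).totalVariation

/-- `f` is integrable with respect to the complex measure `ν`: it is integrable with respect
to the total variation measure of `ν`. -/
def MeasureTheory.ComplexMeasure.CIntegrable {Ω : Type*} [MeasurableSpace Ω]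
    (ν : MeasureTheory.ComplexMeasure Ω) (f : Ω → ℂ) : Prop :=
  MeasureTheory.Integrable f ν.tv

/-- The integral of a complex function against a signed measure. -/
def MeasureTheory.SignedMeasure.cintegral {Ω : Type*} [MeasurableSpace Ω]
    (σ : MeasureTheory.SignedMeasure Ω) (f : Ω → ℂ) : ℂ :=
  (∫ x, f x ∂σ.toJordanDecomposition.posPart) - ∫ x, f x ∂σ.toJordanDecomposition.negPart

/-- The integral of a complex function against a complex measure. -/
def MeasureTheory.ComplexMeasure.cintegral {Ω : Type*} [MeasurableSpace Ω]
    (ν : MeasureTheory.ComplexMeasure Ω) (f : Ω → ℂ) : ℂ :=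
  (MeasureTheory.ComplexMeasure.re ν).cintegral f +
    Complex.I * (MeasureTheory.ComplexMeasure.im ν).cintegral f

/-- The truncation `f̃ₙ` of `f` : `f̃ₙ(x) = f(x)` if `|f(x)| ≤ n`, and `f̃ₙ(x) = 0` otherwise. -/
def trunc {Ω : Type*} (f : Ω → ℂ) (n : ℕ) : Ω → ℂ :=
  fun x => if ‖f x‖ ≤ (n : ℝ) then f x else 0


lemma jd_of_measure (m : MeasureTheory.Measure ℝ) [MeasureTheory.IsFiniteMeasure m] :
    m.toSignedMeasure.toJordanDecomposition =
      { posPart := m, negPart := 0,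
        mutuallySingular := MeasureTheory.Measure.MutuallySingular.zero_right } := by
  apply MeasureTheory.SignedMeasure.toJordanDecomposition_eq
  show m.toSignedMeasure =
    (m.toSignedMeasure - (0 : MeasureTheory.Measure ℝ).toSignedMeasure :
      MeasureTheory.SignedMeasure ℝ)
  rw [MeasureTheory.Measure.toSignedMeasure_zero, sub_zero]

lemma cintegral_real_smul (m : MeasureTheory.Measure ℝ) [MeasureTheory.IsFiniteMeasure m]
    (r : ℝ) (g : ℝ → ℂ) :
    (r • m.toSignedMeasure).cintegral g = (r : ℂ) * ∫ x, g x ∂m := by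
  rw [MeasureTheory.SignedMeasure.cintegral,
    MeasureTheory.SignedMeasure.toJordanDecomposition_smul_real, jd_of_measure]
  rcases le_or_gt 0 r with hr | hr
  · rw [MeasureTheory.JordanDecomposition.real_smul_posPart_nonneg _ _ hr,
      MeasureTheory.JordanDecomposition.real_smul_negPart_nonneg _ _ hr]
    simp only [MeasureTheory.integral_smul_nnreal_measure, smul_zero,
      MeasureTheory.integral_zero_measure, sub_zero]
    rw [NNReal.smul_def, Real.coe_toNNReal r hr, Complex.real_smul]
  · rw [MeasureTheory.JordanDecomposition.real_smul_posPart_neg _ _ hr,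
      MeasureTheory.JordanDecomposition.real_smul_negPart_neg _ _ hr]
    simp only [MeasureTheory.integral_smul_nnreal_measure, smul_zero,
      MeasureTheory.integral_zero_measure]
    rw [NNReal.smul_def, Real.coe_toNNReal _ (by linarith : (0:ℝ) ≤ -r), Complex.real_smul]
    push_cast
    ring

lemma tv_smul_nonneg (m : MeasureTheory.Measure ℝ) [MeasureTheory.IsFiniteMeasure m]
    (r : ℝ) (hr : 0 ≤ r) :
    (r • m.toSignedMeasure).totalVariation = r.toNNReal • m := by
  rw [MeasureTheory.SignedMeasure.totalVariation,
    MeasureTheory.SignedMeasure.toJordanDecomposition_smul_real, jd_of_measure,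
    MeasureTheory.JordanDecomposition.real_smul_posPart_nonneg _ _ hr,
    MeasureTheory.JordanDecomposition.real_smul_negPart_nonneg _ _ hr]
  simp

/-- Let `μ` be a probability measure on `ℬ(ℝ)` with an even density with
respect to Lebesgue measure and with `∫_0^∞ x dμ(x) = ∞`. Let `E(B) = μ(B)·I` and `f = id`.
Then `D(f,E) = {0}`, while `L(f̃ₙ,E)φ = 0` for every `φ` and `n`; in particular the limit
`limₙ L(f̃ₙ,E)φ` exists for every `φ ∈ H`, i.e. `D^{f,E} = H`, and the inclusion
`D(f,E) ⊆ D^{f,E}` can be proper. -/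
theorem stmt7 {H : Type*} [NormedAddCommGroup H] [InnerProductSpace ℂ H] [CompleteSpace H]
    (μ : Measure ℝ) [IsProbabilityMeasure μ]
    (ρ : ℝ → ℝ≥0∞) (hρ : μ = MeasureTheory.volume.withDensity ρ)
    (hρeven : ∀ x : ℝ, ρ (-x) = ρ x)
    (hinf : ∫⁻ x in Set.Ioi (0 : ℝ), ENNReal.ofReal x ∂μ = ⊤)
    (E : Set ℝ → H →L[ℂ] H) (hE : ∀ B : Set ℝ, E B = (μ B).toReal • (1 : H →L[ℂ] H))
    (ν : H → H → MeasureTheory.ComplexMeasure ℝ)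
    (hν : ∀ (ψ φ : H) (B : Set ℝ), MeasurableSet B → ν ψ φ B = ⟪ψ, E B φ⟫)
    (f : ℝ → ℂ) (hf : f = fun x : ℝ => (x : ℂ)) :
    ({φ : H | ∀ ψ : H, (ν ψ φ).CIntegrable f} = {0} ∧
     (∀ (ψ φ : H) (n : ℕ), (ν ψ φ).cintegral (trunc f n) = 0)) ∧
     ∀ (φ : H) (η : ℕ → H),
       (∀ (n : ℕ) (ψ : H), ⟪ψ, η n⟫ = (ν ψ φ).cintegral (trunc f n)) →
       ∃ ξ : H, Tendsto η atTop (𝓝 ξ) := by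
  have hEapp : ∀ (B : Set ℝ) (φ : H), E B φ = (μ B).toReal • φ := by
    intro B φ; rw [hE]; simp
  have hinner : ∀ (ψ φ : H) (B : Set ℝ), ⟪ψ, E B φ⟫ = ((μ B).toReal : ℂ) * ⟪ψ, φ⟫ := by
    intro ψ φ B
    rw [hEapp, RCLike.real_smul_eq_coe_smul (K := ℂ), inner_smul_right]
    norm_cast
  have hre_eval : ∀ (c : MeasureTheory.ComplexMeasure ℝ) (B : Set ℝ),
      MeasureTheory.ComplexMeasure.re c B = (c B).re := fun _ _ => rfl
  have him_eval : ∀ (c : MeasureTheory.ComplexMeasure ℝ) (B : Set ℝ),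
      MeasureTheory.ComplexMeasure.im c B = (c B).im := fun _ _ => rfl
  have hre : ∀ ψ φ : H, (ν ψ φ).re = (⟪ψ, φ⟫ : ℂ).re • μ.toSignedMeasure := by
    intro ψ φ
    refine MeasureTheory.VectorMeasure.ext fun B hB => ?_
    rw [hre_eval, hν _ _ _ hB, hinner,
      MeasureTheory.VectorMeasure.smul_apply,
      MeasureTheory.Measure.toSignedMeasure_apply_measurable hB]
    simp [Complex.mul_re, mul_comm]
    exact Or.inl rfl
  have him : ∀ ψ φ : H, (ν ψ φ).im = (⟪ψ, φ⟫ : ℂ).im • μ.toSignedMeasure := by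
    intro ψ φ
    refine MeasureTheory.VectorMeasure.ext fun B hB => ?_
    rw [him_eval, hν _ _ _ hB, hinner,
      MeasureTheory.VectorMeasure.smul_apply,
      MeasureTheory.Measure.toSignedMeasure_apply_measurable hB]
    simp [Complex.mul_im, mul_comm]
    exact Or.inl rfl
  have hvol : ∀ g : ℝ → ℝ≥0∞, ∫⁻ x, g x ∂(volume : Measure ℝ) = ∫⁻ x, g (-x) ∂volume := by
    intro g
    conv_lhs => rw [← Measure.map_neg_eq_self (volume : Measure ℝ)]
    exact MeasureTheory.lintegral_map_equiv g (MeasurableEquiv.neg ℝ)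
  have hμmap : Measure.map (⇑(MeasurableEquiv.neg ℝ)) μ = μ := by
    ext B hB
    rw [Measure.map_apply (MeasurableEquiv.neg ℝ).measurable hB, hρ,
      MeasureTheory.withDensity_apply _ (hB.preimage (MeasurableEquiv.neg ℝ).measurable),
      MeasureTheory.withDensity_apply _ hB,
      ← MeasureTheory.lintegral_indicator (hB.preimage (MeasurableEquiv.neg ℝ).measurable) ρ,
      ← MeasureTheory.lintegral_indicator hB ρ, hvol (Set.indicator B ρ)]
    refine MeasureTheory.lintegral_congr fun x => ?_
    have hmem : x ∈ ⇑(MeasurableEquiv.neg ℝ) ⁻¹' B ↔ -x ∈ B := Iff.rfl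
    by_cases h : -x ∈ B
    · rw [Set.indicator_of_mem (hmem.mpr h) ρ, Set.indicator_of_mem h ρ]
      exact (hρeven x).symm
    · rw [Set.indicator_of_notMem (fun hc => h (hmem.mp hc)) ρ,
        Set.indicator_of_notMem h ρ]
  have hint0 : ∀ n : ℕ, ∫ x, trunc f n x ∂μ = 0 := by
    intro n
    have hodd : ∀ x : ℝ, trunc f n (-x) = - trunc f n x := by
      intro x
      simp only [trunc, hf]
      have hn : ‖((-x : ℝ) : ℂ)‖ = ‖((x : ℝ) : ℂ)‖ := by
        push_cast; rw [norm_neg]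
      rw [hn]
      split_ifs with h
      · push_cast; ring
      · simp
    have h1 : ∫ x, trunc f n x ∂μ = ∫ x, trunc f n (-x) ∂μ := by
      conv_lhs => rw [← hμmap]
      exact MeasureTheory.integral_map_equiv (MeasurableEquiv.neg ℝ) _
    have h2 : ∫ x, trunc f n (-x) ∂μ = - ∫ x, trunc f n x ∂μ := by
      simp only [hodd]
      exact integral_neg _
    have h3 := h1.trans h2
    linear_combination h3 / 2
  have hpart2 : ∀ (ψ φ : H) (n : ℕ), (ν ψ φ).cintegral (trunc f n) = 0 := by
    intro ψ φ n
    rw [MeasureTheory.ComplexMeasure.cintegral, hre, him, cintegral_real_smul,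
      cintegral_real_smul, hint0]
    simp
  refine ⟨⟨?_, hpart2⟩, ?_⟩
  · ext φ
    simp only [Set.mem_setOf_eq, Set.mem_singleton_iff]
    constructor
    · intro h
      by_contra hφ0
      have hI : MeasureTheory.Integrable f ((ν φ φ).tv) := h φ
      have hle : (ν φ φ).re.totalVariation ≤ (ν φ φ).tv :=
        MeasureTheory.Measure.le_add_right le_rfl
      have hI2 : MeasureTheory.Integrable f ((ν φ φ).re.totalVariation) :=
        hI.mono_measure hle
      have hcre : (⟪φ, φ⟫ : ℂ).re = ‖φ‖ ^ 2 := by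
        have := @inner_self_eq_norm_sq ℂ _ _ _ _ φ
        simpa using this
      rw [hre, hcre, tv_smul_nonneg _ _ (by positivity)] at hI2
      have hkey : (∫⁻ x, (‖f x‖₊ : ℝ≥0∞) ∂μ) = ⊤ := by
        apply top_unique
        rw [← hinf]
        calc ∫⁻ x in Set.Ioi (0 : ℝ), ENNReal.ofReal x ∂μ
            ≤ ∫⁻ x in Set.Ioi (0 : ℝ), (‖f x‖₊ : ℝ≥0∞) ∂μ := by
              apply MeasureTheory.lintegral_mono
              intro x
              subst hf
              calc ENNReal.ofReal x ≤ (‖x‖₊ : ℝ≥0∞) := Real.ofReal_le_enorm x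
                _ = (‖((x : ℝ) : ℂ)‖₊ : ℝ≥0∞) := by
                    congr 1
                    rw [← nnnorm_norm, ← nnnorm_norm ((x : ℝ) : ℂ), Complex.norm_real]
          _ ≤ ∫⁻ x, (‖f x‖₊ : ℝ≥0∞) ∂μ :=
              MeasureTheory.setLIntegral_le_lintegral _ _
      have hfin := hI2.2
      rw [MeasureTheory.HasFiniteIntegral] at hfin
      have hsm : ((‖φ‖ ^ 2).toNNReal • μ) = (((‖φ‖ ^ 2).toNNReal : ℝ≥0∞) • μ) := rfl
      rw [hsm, MeasureTheory.lintegral_smul_measure,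
        (show ∫⁻ x, ‖f x‖ₑ ∂μ = ⊤ from hkey), smul_eq_mul, ENNReal.mul_top] at hfin
      · exact (lt_irrefl _ hfin).elim
      · simp only [ne_eq, ENNReal.coe_eq_zero, Real.toNNReal_eq_zero, not_le]
        exact pow_pos (norm_pos_iff.mpr hφ0) 2
    · rintro rfl ψ
      have hzero : ν ψ 0 = 0 := by
        ext B hB
        rw [hν _ _ _ hB, hEapp]
        simp
      rw [MeasureTheory.ComplexMeasure.CIntegrable, MeasureTheory.ComplexMeasure.tv, hzero,
        show MeasureTheory.ComplexMeasure.re (0 : MeasureTheory.ComplexMeasure ℝ) = 0 from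
          map_zero _,
        show MeasureTheory.ComplexMeasure.im (0 : MeasureTheory.ComplexMeasure ℝ) = 0 from
          map_zero _,
        MeasureTheory.SignedMeasure.totalVariation_zero]
      simp
  · intro φ η hη
    refine ⟨0, ?_⟩
    have hη0 : ∀ n, η n = 0 := by
      intro n
      have := hη n (η n)
      rw [hpart2] at this
      exact inner_self_eq_zero.mp this
    have : η = fun _ => 0 := funext hη0
    rw [this]
    exact tendsto_const_nhds
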